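/- Hard forward KL limit: for a finite action set A, Q : A → ℝ with set of maximizers A* of size n*, and a policy π with full support, lim_{τ→0⁺} [KL(B_τQ ‖ π) + H(B_τQ)] = −(1/n*)∑_{a* ∈ A*} log π(a*), where H denotes Shannon entropy. -/

import Mathlib

open Finset Filter
open scoped Classical

noncomputable def boltzmann {A : Type*} [Fintype A] (Q : A → ℝ) (τ : ℝ) (a : A) : ℝ :=
  Real.exp (Q a / τ) / ∑ b, Real.exp (Q b / τ)

/-- Hard forward KL limit: for a policy `π` with full support,
`lim_{τ→0⁺} [KL(B_τQ ‖ π) + H(B_τQ)] = −(1/n*) ∑_{a* ∈ A*} log π(a*)`,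
where `A*` is the set of maximizers of `Q` and `n* = |A*|`. -/
theorem hard_fkl_limit
    {A : Type*} [Fintype A] [Nonempty A] (Q : A → ℝ)
    (π : A → ℝ) (hπ : ∀ a, 0 < π a) (hπ1 : ∑ a, π a = 1) :
    Tendsto
      (fun τ : ℝ =>
        (∑ a, boltzmann Q τ a * Real.log (boltzmann Q τ a / π a))
          + -(∑ a, boltzmann Q τ a * Real.log (boltzmann Q τ a)))
      (nhdsWithin 0 (Set.Ioi 0))
      (nhds (-(1 / ((Finset.univ.filter
          (fun a => Q a = Finset.univ.sup' Finset.univ_nonempty Q)).card : ℝ)) *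
        ∑ a ∈ Finset.univ.filter
          (fun a => Q a = Finset.univ.sup' Finset.univ_nonempty Q), Real.log (π a))) := by
  classical
  set M := Finset.univ.sup' Finset.univ_nonempty Q with hM
  have hcard : 0 < (Finset.univ.filter (fun a => Q a = M)).card := by
    obtain ⟨a, _, ha⟩ := Finset.exists_mem_eq_sup' (Finset.univ_nonempty (α := A)) Q
    exact Finset.card_pos.2 ⟨a, Finset.mem_filter.2 ⟨Finset.mem_univ a, ha.symm⟩⟩
  set n : ℝ := ((Finset.univ.filter (fun a => Q a = M)).card : ℝ) with hn
  have hn0 : n ≠ 0 := by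
    simp only [hn]
    exact_mod_cast hcard.ne'
  have hbpos : ∀ τ : ℝ, ∀ a : A, 0 < boltzmann Q τ a := by
    intro τ a
    exact div_pos (Real.exp_pos _) (Finset.sum_pos (fun b _ => Real.exp_pos _)
      Finset.univ_nonempty)
  -- Step 1: simplify the expression
  have hfun : (fun τ : ℝ =>
        (∑ a, boltzmann Q τ a * Real.log (boltzmann Q τ a / π a))
          + -(∑ a, boltzmann Q τ a * Real.log (boltzmann Q τ a)))
      = fun τ : ℝ => ∑ a, boltzmann Q τ a * (-Real.log (π a)) := by
    funext τ
    have h1 : ∀ a : A, boltzmann Q τ a * Real.log (boltzmann Q τ a / π a)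
        = boltzmann Q τ a * Real.log (boltzmann Q τ a)
          + boltzmann Q τ a * (-Real.log (π a)) := by
      intro a
      rw [Real.log_div (hbpos τ a).ne' (hπ a).ne']
      ring
    simp only [h1, Finset.sum_add_distrib]
    ring
  rw [hfun]
  -- Step 2: limit of the numerator pieces
  have hNum : ∀ b : A, Tendsto (fun τ : ℝ => Real.exp ((Q b - M) / τ))
      (nhdsWithin 0 (Set.Ioi 0)) (nhds (if Q b = M then 1 else 0)) := by
    intro b
    by_cases hb : Q b = M
    · simp [hb]
    · have hlt : Q b - M < 0 :=
        sub_neg.2 (lt_of_le_of_ne (Finset.le_sup' Q (Finset.mem_univ b)) hb)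
      have h1 : Tendsto (fun τ : ℝ => (Q b - M) / τ) (nhdsWithin 0 (Set.Ioi 0)) atBot := by
        have h2 : Tendsto (fun τ : ℝ => τ⁻¹) (nhdsWithin 0 (Set.Ioi 0)) atTop :=
          tendsto_inv_nhdsGT_zero
        have := Tendsto.const_mul_atTop_of_neg hlt h2
        simpa [div_eq_mul_inv] using this
      rw [if_neg hb]
      exact Real.tendsto_exp_atBot.comp h1
  have hden : Tendsto (fun τ : ℝ => ∑ b, Real.exp ((Q b - M) / τ))
      (nhdsWithin 0 (Set.Ioi 0)) (nhds n) := by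
    have h := tendsto_finset_sum Finset.univ (fun b _ => hNum b)
    have hsum : (∑ b, (if Q b = M then (1:ℝ) else 0)) = n := by
      simp [hn, Finset.sum_boole]
    rwa [hsum] at h
  -- Step 3: limit of boltzmann
  have hlim : ∀ a : A, Tendsto (fun τ : ℝ => boltzmann Q τ a)
      (nhdsWithin 0 (Set.Ioi 0)) (nhds (if Q a = M then 1 / n else 0)) := by
    intro a
    have hrw : ∀ τ ∈ Set.Ioi (0:ℝ), boltzmann Q τ a
        = Real.exp ((Q a - M) / τ) / ∑ b, Real.exp ((Q b - M) / τ) := by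
      intro τ hτ
      have hτ0 : (τ : ℝ) ≠ 0 := ne_of_gt hτ
      have key : ∀ b : A, Real.exp (Q b / τ) = Real.exp ((Q b - M) / τ) * Real.exp (M / τ) := by
        intro b
        rw [← Real.exp_add]
        congr 1
        field_simp
        ring
      simp only [boltzmann, key, ← Finset.sum_mul]
      rw [mul_div_mul_right _ _ (Real.exp_ne_zero _)]
    have h := Tendsto.div (hNum a) hden hn0
    have heq : (fun τ : ℝ => Real.exp ((Q a - M) / τ) / ∑ b, Real.exp ((Q b - M) / τ))
        =ᶠ[nhdsWithin 0 (Set.Ioi 0)] fun τ => boltzmann Q τ a :=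
      eventuallyEq_of_mem self_mem_nhdsWithin (fun τ hτ => (hrw τ hτ).symm)
    have h2 := h.congr' heq
    convert h2 using 2
    split_ifs <;> simp
  -- Step 4: combine
  have h := tendsto_finset_sum Finset.univ
    (fun a _ => (hlim a).mul (tendsto_const_nhds (x := -Real.log (π a))))
  have hval : (∑ a, (if Q a = M then 1 / n else 0) * (-Real.log (π a)))
      = -(1 / n) * ∑ a ∈ Finset.univ.filter (fun a => Q a = M), Real.log (π a) := by
    simp only [ite_mul, zero_mul, ← Finset.sum_filter]
    rw [← Finset.mul_sum, Finset.sum_neg_distrib, mul_neg, neg_mul]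
  rwa [hval] at h
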